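/- Let s < 1/2 and 2 ≤ p < (1/2 - s)^{-1}. There is a constant C > 0 independent of N such that for every X = (X_t)_{t=1}^N ∈ ℝ^N with discrete sine expansion X_t = ∑_{k=1}^N x_k sin(kπt/(N+1)), one has (∑_{t=1}^N |X_t|^p / (N+1))^{1/p} ≤ C (∑_{k=1}^N k^{2s} x_k²)^{1/2}. -/

import Mathlib

open Real
open Finset

lemma cos_sum_aux (N : ℕ) (m : ℤ) (h : ¬ ((2 * ((N : ℤ) + 1)) ∣ m)) :
    ∑ t ∈ Finset.range N, Real.cos ((m : ℝ) * π * (t + 1) / (N + 1)) =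
      if Even m then -1 else 0 := by
  have hN1 : ((N : ℝ) + 1) ≠ 0 := by positivity
  have hN1C : ((N : ℂ) + 1) ≠ 0 := by
    intro hc
    have : ((N : ℝ) + 1 : ℂ) = 0 := by push_cast; push_cast at hc; exact hc
    exact hN1 (by exact_mod_cast this)
  set θ : ℝ := (m : ℝ) * π / (N + 1) with hθ
  set z : ℂ := Complex.exp (θ * Complex.I) with hz
  have hz1 : z ≠ 1 := by
    intro hzz
    rw [hz, Complex.exp_eq_one_iff] at hzz
    obtain ⟨n, hn⟩ := hzz
    apply h
    have hI : (Complex.I : ℂ) ≠ 0 := Complex.I_ne_zero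
    have h1 : (θ : ℂ) = (n : ℂ) * (2 * (π : ℝ)) := by
      apply mul_right_cancel₀ hI
      rw [hn]; push_cast; ring
    have hθr : θ = (n : ℝ) * (2 * π) := by exact_mod_cast h1
    rw [hθ] at hθr
    have hπ : (π : ℝ) ≠ 0 := Real.pi_ne_zero
    have h2 : (m : ℝ) * π = (2 * ((N : ℝ) + 1) * n) * π := by
      field_simp at hθr
      rw [hθr]; ring
    have h3 : (m : ℝ) = ((2 * ((N : ℤ) + 1) * n : ℤ) : ℝ) := by
      have := mul_right_cancel₀ hπ h2
      push_cast
      linarith [this]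
    exact ⟨n, by exact_mod_cast h3⟩
  have hz0 : z ≠ 0 := Complex.exp_ne_zero _
  have hterm : ∀ t : ℕ, Real.cos ((m : ℝ) * π * (t + 1) / (N + 1)) = (z ^ (t + 1)).re := by
    intro t
    rw [hz, ← Complex.exp_nat_mul]
    have harg : ((t + 1 : ℕ) : ℂ) * ((θ : ℝ) * Complex.I) =
        (((m : ℝ) * π * (t + 1) / (N + 1) : ℝ) : ℂ) * Complex.I := by
      push_cast [hθ]
      field_simp
    rw [harg, Complex.exp_ofReal_mul_I_re]
  have hzN1 : z ^ (N + 1) = (-1 : ℂ) ^ m := by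
    rw [hz, ← Complex.exp_nat_mul, ← Complex.exp_pi_mul_I, ← Complex.exp_int_mul]
    congr 1
    push_cast [hθ]
    field_simp
  -- the geometric sum
  have hgs : ∑ t ∈ Finset.range N, z ^ (t + 1) = ((-1 : ℂ) ^ m - z) / (z - 1) := by
    have : ∑ t ∈ Finset.range N, z ^ (t + 1) = z * ((z ^ N - 1) / (z - 1)) := by
      rw [← geom_sum_eq hz1 N, Finset.mul_sum]
      exact Finset.sum_congr rfl fun t _ => by ring
    rw [this, ← hzN1]
    have hsub : z - 1 ≠ 0 := sub_ne_zero.mpr hz1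
    field_simp
    ring
  have hre : ∑ t ∈ Finset.range N, Real.cos ((m : ℝ) * π * (t + 1) / (N + 1)) =
      (((-1 : ℂ) ^ m - z) / (z - 1)).re := by
    rw [← hgs, Complex.re_sum]
    exact Finset.sum_congr rfl fun t _ => hterm t
  rw [hre]
  have hsub : z - 1 ≠ 0 := sub_ne_zero.mpr hz1
  rcases Int.even_or_odd m with hm | hm
  · rw [if_pos hm]
    rw [hm.neg_one_zpow]
    have : ((1 : ℂ) - z) / (z - 1) = -1 := by field_simp; ring
    rw [this]; simp
  · rw [if_neg (Int.not_even_iff_odd.mpr hm)]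
    rw [hm.neg_one_zpow]
    -- show real part is zero via conjugate
    set T : ℂ := ((-1 : ℂ) - z) / (z - 1) with hT
    have hconj : (starRingEnd ℂ) T = -T := by
      rw [hT]
      have hcz : (starRingEnd ℂ) z = z⁻¹ := by
        rw [hz, ← Complex.exp_conj, ← Complex.exp_neg]
        congr 1
        simp [Complex.conj_I]
      have hinv : z⁻¹ - 1 ≠ 0 := by
        intro hh
        exact hz1 (by rw [← inv_inv z, sub_eq_zero.mp hh]; simp)
      rw [map_div₀, map_sub, map_sub, hcz]
      simp only [map_neg, map_one]
      rw [neg_div' ]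
      rw [div_eq_div_iff hinv hsub]
      field_simp
      ring
    have hre0 : T.re = 0 := by
      have h2 := Complex.add_conj T
      rw [hconj] at h2
      have h3 : ((2 * T.re : ℝ) : ℂ) = 0 := by rw [← h2]; ring
      have h4 : (2 * T.re : ℝ) = 0 := by exact_mod_cast h3
      linarith
    rw [hre0]



lemma sin_orth (N k l : ℕ) (hk : k < N) (hl : l < N) :
    ∑ t ∈ Finset.range N,
      Real.sin (((k : ℝ) + 1) * π * (t + 1) / (N + 1)) *
        Real.sin (((l : ℝ) + 1) * π * (t + 1) / (N + 1)) =
      if k = l then ((N : ℝ) + 1) / 2 else 0 := by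
  set m1 : ℤ := (k : ℤ) - l with hm1
  set m2 : ℤ := (k : ℤ) + l + 2 with hm2
  have key : ∀ t : ℕ,
      Real.sin (((k : ℝ) + 1) * π * (t + 1) / (N + 1)) *
        Real.sin (((l : ℝ) + 1) * π * (t + 1) / (N + 1)) =
      (Real.cos ((m1 : ℝ) * π * (t + 1) / (N + 1)) -
        Real.cos ((m2 : ℝ) * π * (t + 1) / (N + 1))) / 2 := by
    intro t
    have e1 : ((m1 : ℝ)) * π * (t + 1) / (N + 1) =
        ((k : ℝ) + 1) * π * (t + 1) / (N + 1) - ((l : ℝ) + 1) * π * (t + 1) / (N + 1) := by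
      push_cast [hm1]; ring
    have e2 : ((m2 : ℝ)) * π * (t + 1) / (N + 1) =
        ((k : ℝ) + 1) * π * (t + 1) / (N + 1) + ((l : ℝ) + 1) * π * (t + 1) / (N + 1) := by
      push_cast [hm2]; ring
    rw [e1, e2, Real.cos_sub, Real.cos_add]
    ring
  rw [Finset.sum_congr rfl fun t _ => key t, ← Finset.sum_div, Finset.sum_sub_distrib]
  have hd2 : ¬ ((2 * ((N : ℤ) + 1)) ∣ m2) := by
    intro hdvd
    have hpos : (0 : ℤ) < m2 := by rw [hm2]; positivity
    have := Int.le_of_dvd hpos hdvd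
    omega
  have hS2 := cos_sum_aux N m2 hd2
  by_cases hkl : k = l
  · subst hkl
    rw [if_pos rfl]
    have h10 : m1 = 0 := by omega
    have hS1 : ∑ t ∈ Finset.range N, Real.cos ((m1 : ℝ) * π * (t + 1) / (N + 1)) = N := by
      rw [h10]
      simp
    have he2 : Even m2 := by rw [hm2]; exact ⟨(k : ℤ) + 1, by ring⟩
    rw [hS1, hS2, if_pos he2]
    ring
  · rw [if_neg hkl]
    have hd1 : ¬ ((2 * ((N : ℤ) + 1)) ∣ m1) := by
      intro hdvd
      have h10 : m1 ≠ 0 := by omega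
      have h11 := Int.le_of_dvd (abs_pos.mpr h10) ((dvd_abs _ _).mpr hdvd)
      have habs : |m1| < 2 * ((N : ℤ) + 1) := abs_lt.mpr ⟨by omega, by omega⟩
      linarith
    have hS1 := cos_sum_aux N m1 hd1
    rw [hS1, hS2]
    have hpar : Even m1 ↔ Even m2 := by
      constructor
      · rintro ⟨r, hr⟩; exact ⟨r + l + 1, by omega⟩
      · rintro ⟨r, hr⟩; exact ⟨r - l - 1, by omega⟩
    by_cases he : Even m1
    · rw [if_pos he, if_pos (hpar.mp he)]; ring
    · rw [if_neg he, if_neg (fun h => he (hpar.mpr h))]; ring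



lemma bessel (N : ℕ) (x : Fin N → ℝ) (B : Finset (Fin N)) :
    ∑ t : Fin N, (∑ k ∈ B, x k * Real.sin (((k : ℕ) + 1) * π * ((t : ℕ) + 1) / (N + 1))) ^ 2
      = ((N : ℝ) + 1) / 2 * ∑ k ∈ B, (x k) ^ 2 := by
  have expand : ∀ t : Fin N,
      (∑ k ∈ B, x k * Real.sin (((k : ℕ) + 1) * π * ((t : ℕ) + 1) / (N + 1))) ^ 2 =
      ∑ k ∈ B, ∑ l ∈ B, (x k * x l) *
        (Real.sin (((k : ℕ) + 1) * π * ((t : ℕ) + 1) / (N + 1)) *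
         Real.sin (((l : ℕ) + 1) * π * ((t : ℕ) + 1) / (N + 1))) := by
    intro t
    rw [sq, Finset.sum_mul_sum]
    exact Finset.sum_congr rfl fun k _ => Finset.sum_congr rfl fun l _ => by ring
  rw [Finset.sum_congr rfl fun t _ => expand t]
  rw [Finset.sum_comm]
  rw [Finset.sum_congr rfl fun k _ => Finset.sum_comm]
  have inner : ∀ k ∈ B, (∑ l ∈ B, ∑ t : Fin N, (x k * x l) *
      (Real.sin (((k : ℕ) + 1) * π * ((t : ℕ) + 1) / (N + 1)) *
       Real.sin (((l : ℕ) + 1) * π * ((t : ℕ) + 1) / (N + 1)))) =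
      ((N : ℝ) + 1) / 2 * (x k) ^ 2 := by
    intro k hk
    have step : ∀ l : Fin N, (∑ t : Fin N, (x k * x l) *
        (Real.sin (((k : ℕ) + 1) * π * ((t : ℕ) + 1) / (N + 1)) *
         Real.sin (((l : ℕ) + 1) * π * ((t : ℕ) + 1) / (N + 1)))) =
        if k = l then (x k * x l) * (((N : ℝ) + 1) / 2) else 0 := by
      intro l
      rw [← Finset.mul_sum]
      have : (∑ t : Fin N,
          Real.sin (((k : ℕ) + 1) * π * ((t : ℕ) + 1) / (N + 1)) *
          Real.sin (((l : ℕ) + 1) * π * ((t : ℕ) + 1) / (N + 1))) =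
          if k = l then ((N : ℝ) + 1) / 2 else 0 := by
        rw [Fin.sum_univ_eq_sum_range (fun t =>
          Real.sin (((k : ℕ) + 1) * π * ((t : ℕ) + 1) / (N + 1)) *
          Real.sin (((l : ℕ) + 1) * π * ((t : ℕ) + 1) / (N + 1)))]
        rw [sin_orth N k l k.isLt l.isLt]
        by_cases h : k = l
        · rw [if_pos (by rw [h]), if_pos h]
        · rw [if_neg (fun hh => h (Fin.val_injective hh)), if_neg h]
      rw [this]
      by_cases h : k = l
      · rw [if_pos h, if_pos h]
      · rw [if_neg h, if_neg h, mul_zero]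
    rw [Finset.sum_congr rfl fun l _ => step l]
    rw [Finset.sum_ite_eq B k (fun l => (x k * x l) * (((N : ℝ) + 1) / 2)), if_pos hk]
    ring
  rw [Finset.sum_congr rfl inner, ← Finset.mul_sum]

lemma minkowski_finset {ι κ : Type*} (s : Finset ι) (u : Finset κ) (F : κ → ι → ℝ)
    {p : ℝ} (hp : 1 ≤ p) :
    (∑ t ∈ s, |∑ j ∈ u, F j t| ^ p) ^ (1 / p) ≤
      ∑ j ∈ u, (∑ t ∈ s, |F j t| ^ p) ^ (1 / p) := by
  classical
  induction u using Finset.induction_on with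
  | empty =>
    have hp0 : (0:ℝ) < p := lt_of_lt_of_le zero_lt_one hp
    simp only [Finset.sum_empty, abs_zero, Real.zero_rpow hp0.ne', Finset.sum_const_zero]
    rw [Real.zero_rpow (by positivity)]
  | @insert a u' ha ih =>
    calc (∑ t ∈ s, |∑ j ∈ insert a u', F j t| ^ p) ^ (1 / p)
        = (∑ t ∈ s, |F a t + ∑ j ∈ u', F j t| ^ p) ^ (1 / p) := by
          congr 1; exact Finset.sum_congr rfl fun t _ => by rw [Finset.sum_insert ha]
      _ ≤ (∑ t ∈ s, |F a t| ^ p) ^ (1 / p) + (∑ t ∈ s, |∑ j ∈ u', F j t| ^ p) ^ (1 / p) :=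
          Real.Lp_add_le s (fun t => F a t) (fun t => ∑ j ∈ u', F j t) hp
      _ ≤ (∑ t ∈ s, |F a t| ^ p) ^ (1 / p) + ∑ j ∈ u', (∑ t ∈ s, |F j t| ^ p) ^ (1 / p) := by
          exact add_le_add le_rfl ih
      _ = ∑ j ∈ insert a u', (∑ t ∈ s, |F j t| ^ p) ^ (1 / p) :=
          (Finset.sum_insert (f := fun j => (∑ t ∈ s, |F j t| ^ p) ^ (1 / p)) ha).symm



set_option maxHeartbeats 1000000 in
theorem stmt_14 (s p : ℝ) (hs : s < 1 / 2) (hp2 : 2 ≤ p) (hp : p < (1 / 2 - s)⁻¹) :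
    ∃ C : ℝ, 0 < C ∧ ∀ (N : ℕ) (x : Fin N → ℝ) (X : Fin N → ℝ),
      (∀ t : Fin N, X t =
        ∑ k : Fin N, x k * Real.sin (((k : ℕ) + 1) * π * ((t : ℕ) + 1) / (N + 1))) →
      (∑ t : Fin N, |X t| ^ p / (N + 1)) ^ (1 / p) ≤
        C * (∑ k : Fin N, ((k : ℕ) + 1 : ℝ) ^ (2 * s) * (x k) ^ 2) ^ (1 / 2 : ℝ) := by
  have hp0 : (0:ℝ) < p := by linarith
  have hp1 : (1:ℝ) ≤ p := by linarith
  have hhs : (0:ℝ) < 1/2 - s := by linarith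
  have heps : 0 < s + 1/p - 1/2 := by
    have h2 : p * (1/2 - s) < 1 := by
      rw [inv_eq_one_div] at hp
      exact (lt_div_iff₀ hhs).mp hp
    have h3 : 1/2 - s < 1/p := by
      rw [lt_div_iff₀ hp0]
      nlinarith
    linarith
  set ε : ℝ := s + 1/p - 1/2 with hεdef
  set ρ : ℝ := (2:ℝ) ^ (-ε) with hρdef
  have hρ0 : 0 < ρ := Real.rpow_pos_of_pos two_pos _
  have hρ1 : ρ < 1 := Real.rpow_lt_one_of_one_lt_of_neg one_lt_two (by linarith)
  set r : ℝ := ρ ^ 2 with hrdef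
  have hr0 : 0 ≤ r := sq_nonneg ρ
  have hr1 : r < 1 := by
    rw [hrdef]
    nlinarith
  set cm : ℝ := max 1 ((2:ℝ) ^ (-(2*s))) with hcmdef
  have hcm1 : (1:ℝ) ≤ cm := le_max_left _ _
  have hcm0 : 0 < cm := by linarith
  have h1r : (0:ℝ) < 1 - r := by linarith
  refine ⟨cm ^ ((1:ℝ)/2) * ((1 - r)⁻¹) ^ ((1:ℝ)/2),
    mul_pos (Real.rpow_pos_of_pos hcm0 _) (Real.rpow_pos_of_pos (inv_pos.mpr h1r) _), ?_⟩
  intro N x X hX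
  classical
  -- weight
  set w : ℝ := ((N:ℝ)+1) ^ (-(1/p)) with hwdef
  have hN0 : (0:ℝ) < (N:ℝ) + 1 := by positivity
  have hw0 : 0 < w := Real.rpow_pos_of_pos hN0 _
  have hwp : w ^ p = ((N:ℝ)+1)⁻¹ := by
    rw [hwdef, ← Real.rpow_mul (le_of_lt hN0), show -(1/p)*p = -1 by field_simp,
      Real.rpow_neg_one]
  -- blocks
  set g : Fin N → ℕ := fun k => Nat.log 2 ((k:ℕ)+1) with hgdef
  set B : ℕ → Finset (Fin N) := fun j => univ.filter (fun k => g k = j) with hBdef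
  have hmaps : ∀ k ∈ (univ : Finset (Fin N)), g k ∈ Finset.range N := by
    intro k _
    rw [Finset.mem_range]
    have h1 : 2 ^ (g k) ≤ (k:ℕ) + 1 := Nat.pow_log_le_self 2 (Nat.succ_ne_zero _)
    have h2 : (k:ℕ) + 1 ≤ N := k.isLt
    have h3 : N < 2 ^ N := Nat.lt_two_pow_self (n := N)
    have : (2:ℕ) ^ (g k) < 2 ^ N := by omega
    exact (Nat.pow_lt_pow_iff_right (by norm_num)).mp this
  have hpart : ∀ f : Fin N → ℝ, ∑ j ∈ Finset.range N, ∑ k ∈ B j, f k = ∑ k, f k := by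
    intro f
    exact Finset.sum_fiberwise_of_maps_to hmaps f
  -- block bounds
  have hBle : ∀ j : ℕ, ∀ k ∈ B j, 2 ^ j ≤ (k:ℕ) + 1 ∧ (k:ℕ) + 1 < 2 ^ (j+1) := by
    intro j k hk
    rw [hBdef, Finset.mem_filter] at hk
    have hgk : Nat.log 2 ((k:ℕ)+1) = j := hk.2
    constructor
    · rw [← hgk]; exact Nat.pow_log_le_self 2 (Nat.succ_ne_zero _)
    · rw [← hgk]; exact Nat.lt_pow_succ_log_self (by norm_num) _
  -- a j : block Sobolev mass
  set a : ℕ → ℝ := fun j => ∑ k ∈ B j, ((k:ℕ) + 1 : ℝ) ^ (2*s) * (x k)^2 with hadef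
  have ha0 : ∀ j, 0 ≤ a j := by
    intro j
    apply Finset.sum_nonneg
    intro k _
    have : (0:ℝ) < ((k:ℕ) + 1 : ℝ) ^ (2*s) := Real.rpow_pos_of_pos (by positivity) _
    positivity
  -- G functions
  set G : ℕ → Fin N → ℝ := fun j t =>
    (∑ k ∈ B j, x k * Real.sin (((k : ℕ) + 1) * π * ((t : ℕ) + 1) / (N + 1))) * w with hGdef
  have hsplit : ∀ t : Fin N, X t * w = ∑ j ∈ Finset.range N, G j t := by
    intro t
    rw [hX t, hGdef]
    rw [← Finset.sum_mul]
    congr 1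
    exact (hpart (fun k => x k * Real.sin (((k : ℕ) + 1) * π * ((t : ℕ) + 1) / (N + 1)))).symm
  -- LHS rewrite
  have hLHS : (∑ t : Fin N, |X t| ^ p / ((N:ℝ) + 1)) = ∑ t : Fin N, |X t * w| ^ p := by
    apply Finset.sum_congr rfl
    intro t _
    rw [abs_mul, Real.mul_rpow (abs_nonneg _) (abs_nonneg _), abs_of_pos hw0, hwp,
      div_eq_mul_inv]
  -- block estimate
  have hblock : ∀ j ∈ Finset.range N,
      (∑ t : Fin N, |G j t| ^ p) ^ (1/p) ≤ cm ^ ((1:ℝ)/2) * (ρ ^ j * (a j) ^ ((1:ℝ)/2)) := by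
    intro j _
    set Y : Fin N → ℝ := fun t =>
      ∑ k ∈ B j, x k * Real.sin (((k : ℕ) + 1) * π * ((t : ℕ) + 1) / (N + 1)) with hYdef
    set S2 : ℝ := ∑ k ∈ B j, (x k) ^ 2 with hS2def
    have hS2nn : 0 ≤ S2 := Finset.sum_nonneg fun k _ => sq_nonneg _
    set T : ℝ := (2:ℝ) ^ ((j:ℕ):ℝ) with hTdef
    have hT0 : (0:ℝ) < T := Real.rpow_pos_of_pos two_pos _
    have hbessel : ∑ t : Fin N, (Y t) ^ 2 = ((N:ℝ) + 1) / 2 * S2 := bessel N x (B j)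
    -- cardinality bound
    have hcard : ((B j).card : ℝ) ≤ T := by
      have hc : (B j).card ≤ (Finset.Ico (2^j) (2^(j+1))).card := by
        refine Finset.card_le_card_of_injOn (fun (k : Fin N) => (k:ℕ) + 1) ?_ ?_
        · intro k hk
          exact Finset.mem_Ico.mpr ⟨(hBle j k hk).1, (hBle j k hk).2⟩
        · intro k₁ _ k₂ _ h
          simp only at h
          exact Fin.ext (by omega)
      rw [Nat.card_Ico] at hc
      have hc2 : (B j).card ≤ 2 ^ j := by
        have : (2:ℕ)^(j+1) = 2 * 2^j := by rw [pow_succ]; ring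
        omega
      calc ((B j).card : ℝ) ≤ ((2^j : ℕ) : ℝ) := by exact_mod_cast hc2
        _ = T := by rw [hTdef, Real.rpow_natCast]; push_cast; ring
    -- sup bound
    have hsup : ∀ t : Fin N, (Y t) ^ 2 ≤ T * S2 := by
      intro t
      have h1 : |Y t| ≤ ∑ k ∈ B j, |x k| := by
        calc |Y t| ≤ ∑ k ∈ B j,
            |x k * Real.sin (((k : ℕ) + 1) * π * ((t : ℕ) + 1) / (N + 1))| :=
              Finset.abs_sum_le_sum_abs _ _
          _ ≤ ∑ k ∈ B j, |x k| := by
              apply Finset.sum_le_sum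
              intro k _
              rw [abs_mul]
              exact mul_le_of_le_one_right (abs_nonneg _) (abs_sin_le_one _)
      have h2 : (∑ k ∈ B j, |x k|) ^ 2 ≤ S2 * (B j).card := by
        have := Finset.sum_mul_sq_le_sq_mul_sq (B j) (fun k => |x k|) (fun _ => (1:ℝ))
        simp only [mul_one, one_pow, sq_abs] at this
        rw [Finset.sum_const, nsmul_eq_mul, mul_one] at this
        exact this
      calc (Y t) ^ 2 = |Y t| ^ 2 := (sq_abs _).symm
        _ ≤ (∑ k ∈ B j, |x k|) ^ 2 := by
            apply sq_le_sq'
            · have h0 : 0 ≤ ∑ k ∈ B j, |x k| := Finset.sum_nonneg fun k _ => abs_nonneg _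
              linarith [abs_nonneg (Y t)]
            · exact h1
        _ ≤ S2 * (B j).card := h2
        _ ≤ S2 * T := mul_le_mul_of_nonneg_left hcard hS2nn
        _ = T * S2 := mul_comm _ _
    -- pointwise p-th power bound
    set K : ℝ := T * S2 with hKdef
    have hK0 : 0 ≤ K := mul_nonneg hT0.le hS2nn
    have hpt : ∀ t : Fin N, |G j t| ^ p ≤ K ^ ((p-2)/2) * (Y t)^2 * ((N:ℝ)+1)⁻¹ := by
      intro t
      have hGt : |G j t| ^ p = |Y t| ^ p * ((N:ℝ)+1)⁻¹ := by
        rw [hGdef]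
        rw [abs_mul, Real.mul_rpow (abs_nonneg _) (abs_nonneg _), abs_of_pos hw0, hwp]
      have hsq : ((Y t)^2 : ℝ) = |Y t| ^ (2:ℝ) := by
        rw [← sq_abs, ← Real.rpow_natCast |Y t| 2]
        norm_num
      have hYp : |Y t| ^ p = ((Y t)^2) ^ ((p-2)/2) * (Y t)^2 := by
        calc |Y t| ^ p = |Y t| ^ ((p - 2) + 2) := by norm_num
          _ = |Y t| ^ (p-2) * |Y t| ^ (2:ℝ) := Real.rpow_add' (abs_nonneg _) (by linarith)
          _ = ((Y t)^2) ^ ((p-2)/2) * (Y t)^2 := by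
              rw [hsq, ← Real.rpow_mul (abs_nonneg _)]
              congr 2
              ring
      have hmono : ((Y t)^2) ^ ((p-2)/2) ≤ K ^ ((p-2)/2) :=
        Real.rpow_le_rpow (sq_nonneg _) (hsup t) (by linarith)
      rw [hGt, hYp]
      apply mul_le_mul_of_nonneg_right _ (by positivity)
      exact mul_le_mul_of_nonneg_right hmono (sq_nonneg _)
    -- sum bound
    have hsum : ∑ t : Fin N, |G j t| ^ p ≤ K ^ ((p-2)/2) * S2 := by
      calc ∑ t : Fin N, |G j t| ^ p
          ≤ ∑ t : Fin N, K ^ ((p-2)/2) * (Y t)^2 * ((N:ℝ)+1)⁻¹ :=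
            Finset.sum_le_sum fun t _ => hpt t
        _ = K ^ ((p-2)/2) * ((N:ℝ)+1)⁻¹ * ∑ t : Fin N, (Y t)^2 := by
            rw [Finset.mul_sum]
            exact Finset.sum_congr rfl fun t _ => by ring
        _ = K ^ ((p-2)/2) * (S2 / 2) := by
            rw [hbessel]
            field_simp
        _ ≤ K ^ ((p-2)/2) * S2 := by
            have h0 : 0 ≤ K ^ ((p-2)/2) := Real.rpow_nonneg hK0 _
            nlinarith [mul_nonneg h0 hS2nn]
    have hroot : (∑ t : Fin N, |G j t| ^ p) ^ (1/p) ≤ (K ^ ((p-2)/2) * S2) ^ (1/p) := by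
      apply Real.rpow_le_rpow _ hsum (by positivity)
      exact Finset.sum_nonneg fun t _ => Real.rpow_nonneg (abs_nonneg _) _
    -- algebra on the RHS of hroot
    have halg : (K ^ ((p-2)/2) * S2) ^ (1/p) =
        (2:ℝ) ^ (((j:ℕ):ℝ) * ((1:ℝ)/2 - 1/p)) * S2 ^ ((1:ℝ)/2) := by
      have e1 : K ^ ((p-2)/2) = T ^ ((p-2)/2) * S2 ^ ((p-2)/2) :=
        Real.mul_rpow hT0.le hS2nn
      rw [e1, mul_assoc]
      rw [Real.mul_rpow (Real.rpow_nonneg hT0.le _)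
        (mul_nonneg (Real.rpow_nonneg hS2nn _) hS2nn)]
      have e2 : S2 ^ ((p-2)/2) * S2 = S2 ^ (p/2) := by
        have h5 : S2 ^ ((p-2)/2 + 1) = S2 ^ ((p-2)/2) * S2 ^ (1:ℝ) :=
          Real.rpow_add' hS2nn (by intro hc; linarith)
        rw [Real.rpow_one] at h5
        rw [← h5]
        congr 1
        ring
      have e3 : (S2 ^ (p/2)) ^ (1/p) = S2 ^ ((1:ℝ)/2) := by
        rw [← Real.rpow_mul hS2nn]
        congr 1
        field_simp
      have e4 : (T ^ ((p-2)/2)) ^ (1/p) = (2:ℝ) ^ (((j:ℕ):ℝ) * ((1:ℝ)/2 - 1/p)) := by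
        rw [hTdef, ← Real.rpow_mul (by norm_num : (0:ℝ) ≤ 2),
          ← Real.rpow_mul (by norm_num : (0:ℝ) ≤ 2)]
        congr 1
        field_simp
      rw [e2, e3, e4]
    -- Sobolev weight comparison on the block
    have hF8 : S2 ≤ cm * ((2:ℝ) ^ (-(2*s)*((j:ℕ):ℝ)) * a j) := by
      have hptw : ∀ k ∈ B j, (x k)^2 ≤
          cm * ((2:ℝ) ^ (-(2*s)*((j:ℕ):ℝ)) * (((k:ℕ) + 1 : ℝ) ^ (2*s) * (x k)^2)) := by
        intro k hk
        have hlow : (2:ℝ) ^ ((j:ℕ):ℝ) ≤ ((k:ℕ) + 1 : ℝ) := by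
          have := (hBle j k hk).1
          calc (2:ℝ) ^ ((j:ℕ):ℝ) = ((2^j : ℕ) : ℝ) := by
                rw [Real.rpow_natCast]; push_cast; ring
            _ ≤ ((k:ℕ) + 1 : ℝ) := by exact_mod_cast this
        have hup : ((k:ℕ) + 1 : ℝ) ≤ (2:ℝ) ^ (((j:ℕ):ℝ) + 1) := by
          have := (hBle j k hk).2
          calc ((k:ℕ) + 1 : ℝ) ≤ ((2^(j+1) : ℕ) : ℝ) := by exact_mod_cast this.le
            _ = (2:ℝ) ^ (((j:ℕ):ℝ) + 1) := by
                rw [show (((j:ℕ):ℝ) + 1) = (((j+1:ℕ)):ℝ) by push_cast; ring,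
                  Real.rpow_natCast]
                push_cast; ring
        have hk1pos : (0:ℝ) < ((k:ℕ) + 1 : ℝ) := by positivity
        have hkey : (2:ℝ) ^ ((2*s)*((j:ℕ):ℝ)) ≤ cm * ((k:ℕ) + 1 : ℝ) ^ (2*s) := by
          rcases le_or_gt 0 s with hs0 | hs0
          · have h1 : ((2:ℝ) ^ ((j:ℕ):ℝ)) ^ (2*s) ≤ ((k:ℕ) + 1 : ℝ) ^ (2*s) :=
              Real.rpow_le_rpow (Real.rpow_nonneg (by norm_num) _) hlow (by linarith)
            have h2 : (2:ℝ) ^ ((2*s)*((j:ℕ):ℝ)) = ((2:ℝ) ^ ((j:ℕ):ℝ)) ^ (2*s) := by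
              rw [← Real.rpow_mul (by norm_num : (0:ℝ) ≤ 2)]
              congr 1; ring
            have h3 : (0:ℝ) ≤ ((k:ℕ) + 1 : ℝ) ^ (2*s) := Real.rpow_nonneg hk1pos.le _
            calc (2:ℝ) ^ ((2*s)*((j:ℕ):ℝ)) = ((2:ℝ) ^ ((j:ℕ):ℝ)) ^ (2*s) := h2
              _ ≤ ((k:ℕ) + 1 : ℝ) ^ (2*s) := h1
              _ ≤ cm * ((k:ℕ) + 1 : ℝ) ^ (2*s) := by nlinarith
          · have h1 : ((2:ℝ) ^ (((j:ℕ):ℝ) + 1)) ^ (2*s) ≤ ((k:ℕ) + 1 : ℝ) ^ (2*s) :=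
              Real.rpow_le_rpow_of_nonpos hk1pos hup (by linarith)
            have hcm2 : (2:ℝ) ^ (-(2*s)) ≤ cm := le_max_right _ _
            have h2 : (2:ℝ) ^ (-(2*s)) * ((2:ℝ) ^ (((j:ℕ):ℝ) + 1)) ^ (2*s) =
                (2:ℝ) ^ ((2*s)*((j:ℕ):ℝ)) := by
              rw [← Real.rpow_mul (by norm_num : (0:ℝ) ≤ 2),
                ← Real.rpow_add two_pos]
              congr 1; ring
            have h3 : (0:ℝ) ≤ ((2:ℝ) ^ (((j:ℕ):ℝ) + 1)) ^ (2*s) :=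
              Real.rpow_nonneg (Real.rpow_nonneg (by norm_num) _) _
            have h4 : (0:ℝ) ≤ (2:ℝ) ^ (-(2*s)) := Real.rpow_nonneg (by norm_num) _
            calc (2:ℝ) ^ ((2*s)*((j:ℕ):ℝ))
                = (2:ℝ) ^ (-(2*s)) * ((2:ℝ) ^ (((j:ℕ):ℝ) + 1)) ^ (2*s) := h2.symm
              _ ≤ cm * ((2:ℝ) ^ (((j:ℕ):ℝ) + 1)) ^ (2*s) :=
                  mul_le_mul_of_nonneg_right hcm2 h3
              _ ≤ cm * ((k:ℕ) + 1 : ℝ) ^ (2*s) :=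
                  mul_le_mul_of_nonneg_left h1 hcm0.le
        have hcanc : (2:ℝ) ^ ((2*s)*((j:ℕ):ℝ)) * (2:ℝ) ^ (-(2*s)*((j:ℕ):ℝ)) = 1 := by
          rw [← Real.rpow_add two_pos, show (2*s)*((j:ℕ):ℝ) + -(2*s)*((j:ℕ):ℝ) = 0 by ring,
            Real.rpow_zero]
        have h2a : (0:ℝ) ≤ (2:ℝ) ^ (-(2*s)*((j:ℕ):ℝ)) := Real.rpow_nonneg (by norm_num) _
        nlinarith [mul_le_mul_of_nonneg_right hkey (mul_nonneg h2a (sq_nonneg (x k))),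
          sq_nonneg (x k)]
      calc S2 ≤ ∑ k ∈ B j,
          cm * ((2:ℝ) ^ (-(2*s)*((j:ℕ):ℝ)) * (((k:ℕ) + 1 : ℝ) ^ (2*s) * (x k)^2)) :=
            Finset.sum_le_sum hptw
        _ = cm * ((2:ℝ) ^ (-(2*s)*((j:ℕ):ℝ)) * a j) := by
            rw [hadef, ← Finset.mul_sum, ← Finset.mul_sum]
    -- take square roots in hF8
    have hF8r : S2 ^ ((1:ℝ)/2) ≤
        cm ^ ((1:ℝ)/2) * ((2:ℝ) ^ (-s*((j:ℕ):ℝ)) * (a j) ^ ((1:ℝ)/2)) := by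
      have h0 : (0:ℝ) ≤ (2:ℝ) ^ (-(2*s)*((j:ℕ):ℝ)) := Real.rpow_nonneg (by norm_num) _
      calc S2 ^ ((1:ℝ)/2) ≤ (cm * ((2:ℝ) ^ (-(2*s)*((j:ℕ):ℝ)) * a j)) ^ ((1:ℝ)/2) :=
            Real.rpow_le_rpow hS2nn hF8 (by norm_num)
        _ = cm ^ ((1:ℝ)/2) * ((2:ℝ) ^ (-(2*s)*((j:ℕ):ℝ)) * a j) ^ ((1:ℝ)/2) :=
            Real.mul_rpow hcm0.le (mul_nonneg h0 (ha0 j))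
        _ = cm ^ ((1:ℝ)/2) * (((2:ℝ) ^ (-(2*s)*((j:ℕ):ℝ))) ^ ((1:ℝ)/2) *
              (a j) ^ ((1:ℝ)/2)) := by rw [Real.mul_rpow h0 (ha0 j)]
        _ = cm ^ ((1:ℝ)/2) * ((2:ℝ) ^ (-s*((j:ℕ):ℝ)) * (a j) ^ ((1:ℝ)/2)) := by
            rw [← Real.rpow_mul (by norm_num : (0:ℝ) ≤ 2)]
            congr 3
            ring
    -- final combination
    have hcomb : (2:ℝ) ^ (((j:ℕ):ℝ) * ((1:ℝ)/2 - 1/p)) * (2:ℝ) ^ (-s*((j:ℕ):ℝ)) = ρ ^ j := by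
      rw [← Real.rpow_add two_pos, hρdef, ← Real.rpow_natCast ((2:ℝ) ^ (-ε)) j,
        ← Real.rpow_mul (by norm_num : (0:ℝ) ≤ 2)]
      congr 1
      rw [hεdef]
      ring
    calc (∑ t : Fin N, |G j t| ^ p) ^ (1/p)
        ≤ (K ^ ((p-2)/2) * S2) ^ (1/p) := hroot
      _ = (2:ℝ) ^ (((j:ℕ):ℝ) * ((1:ℝ)/2 - 1/p)) * S2 ^ ((1:ℝ)/2) := halg
      _ ≤ (2:ℝ) ^ (((j:ℕ):ℝ) * ((1:ℝ)/2 - 1/p)) *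
            (cm ^ ((1:ℝ)/2) * ((2:ℝ) ^ (-s*((j:ℕ):ℝ)) * (a j) ^ ((1:ℝ)/2))) :=
          mul_le_mul_of_nonneg_left hF8r (Real.rpow_nonneg (by norm_num) _)
      _ = cm ^ ((1:ℝ)/2) * (((2:ℝ) ^ (((j:ℕ):ℝ) * ((1:ℝ)/2 - 1/p)) *
            (2:ℝ) ^ (-s*((j:ℕ):ℝ))) * (a j) ^ ((1:ℝ)/2)) := by ring
      _ = cm ^ ((1:ℝ)/2) * (ρ ^ j * (a j) ^ ((1:ℝ)/2)) := by rw [hcomb]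
  -- final assembly
  have hmink : (∑ t : Fin N, |X t * w| ^ p) ^ (1/p) ≤
      ∑ j ∈ Finset.range N, (∑ t : Fin N, |G j t| ^ p) ^ (1/p) := by
    have := minkowski_finset (univ : Finset (Fin N)) (Finset.range N) G hp1
    calc (∑ t : Fin N, |X t * w| ^ p) ^ (1/p)
        = (∑ t : Fin N, |∑ j ∈ Finset.range N, G j t| ^ p) ^ (1/p) := by
          congr 1
          exact Finset.sum_congr rfl fun t _ => by rw [hsplit t]
      _ ≤ _ := this
  have hCS : ∑ j ∈ Finset.range N, ρ ^ j * (a j) ^ ((1:ℝ)/2) ≤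
      ((1 - r)⁻¹) ^ ((1:ℝ)/2) *
        (∑ k : Fin N, ((k : ℕ) + 1 : ℝ) ^ (2 * s) * (x k) ^ 2) ^ ((1:ℝ)/2) := by
    set RHS2 : ℝ := ∑ k : Fin N, ((k : ℕ) + 1 : ℝ) ^ (2 * s) * (x k) ^ 2 with hR2
    have hR2nn : 0 ≤ RHS2 := by
      apply Finset.sum_nonneg
      intro k _
      have : (0:ℝ) < ((k:ℕ) + 1 : ℝ) ^ (2*s) := Real.rpow_pos_of_pos (by positivity) _
      positivity
    set q : ℝ := ∑ j ∈ Finset.range N, ρ ^ j * (a j) ^ ((1:ℝ)/2) with hq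
    have hq0 : 0 ≤ q := by
      apply Finset.sum_nonneg
      intro j _
      have := Real.rpow_nonneg (ha0 j) ((1:ℝ)/2)
      positivity
    have hcs2 : q ^ 2 ≤ (∑ j ∈ Finset.range N, (ρ ^ j) ^ 2) *
        (∑ j ∈ Finset.range N, ((a j) ^ ((1:ℝ)/2)) ^ 2) :=
      Finset.sum_mul_sq_le_sq_mul_sq _ _ _
    have e1 : (∑ j ∈ Finset.range N, (ρ ^ j) ^ 2) = ∑ j ∈ Finset.range N, r ^ j := by
      apply Finset.sum_congr rfl
      intro j _
      rw [hrdef, ← pow_mul, ← pow_mul, Nat.mul_comm]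
    have e2 : (∑ j ∈ Finset.range N, ((a j) ^ ((1:ℝ)/2)) ^ 2) = ∑ j ∈ Finset.range N, a j := by
      apply Finset.sum_congr rfl
      intro j _
      rw [← Real.rpow_natCast ((a j) ^ ((1:ℝ)/2)) 2, ← Real.rpow_mul (ha0 j)]
      norm_num
    have hgeom : ∑ j ∈ Finset.range N, r ^ j ≤ (1 - r)⁻¹ := by
      have hrne : r ≠ 1 := ne_of_lt hr1
      rw [geom_sum_eq hrne]
      have heq : (r ^ N - 1)/(r - 1) = (1 - r ^ N)/(1 - r) := by
        rw [div_eq_div_iff (by linarith) (by linarith)]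
        ring
      rw [heq, inv_eq_one_div, div_le_div_iff₀ h1r h1r]
      nlinarith [pow_nonneg hr0 N]
    have hparta : (∑ j ∈ Finset.range N, a j) = RHS2 := by
      rw [hadef, hR2]
      exact hpart (fun k => ((k:ℕ) + 1 : ℝ) ^ (2*s) * (x k)^2)
    have hmid : q ^ 2 ≤ (1 - r)⁻¹ * RHS2 := by
      calc q ^ 2 ≤ (∑ j ∈ Finset.range N, (ρ ^ j) ^ 2) *
          (∑ j ∈ Finset.range N, ((a j) ^ ((1:ℝ)/2)) ^ 2) := hcs2
        _ = (∑ j ∈ Finset.range N, r ^ j) * RHS2 := by rw [e1, e2, hparta]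
        _ ≤ (1 - r)⁻¹ * RHS2 := mul_le_mul_of_nonneg_right hgeom hR2nn
    calc q = (q ^ 2) ^ ((1:ℝ)/2) := by
          rw [← Real.rpow_natCast q 2, ← Real.rpow_mul hq0]
          norm_num
      _ ≤ ((1 - r)⁻¹ * RHS2) ^ ((1:ℝ)/2) :=
          Real.rpow_le_rpow (sq_nonneg q) hmid (by norm_num)
      _ = ((1 - r)⁻¹) ^ ((1:ℝ)/2) * RHS2 ^ ((1:ℝ)/2) :=
          Real.mul_rpow (by positivity) hR2nn
  calc (∑ t : Fin N, |X t| ^ p / ((N:ℝ) + 1)) ^ (1/p)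
      = (∑ t : Fin N, |X t * w| ^ p) ^ (1/p) := by rw [hLHS]
    _ ≤ ∑ j ∈ Finset.range N, (∑ t : Fin N, |G j t| ^ p) ^ (1/p) := hmink
    _ ≤ ∑ j ∈ Finset.range N, cm ^ ((1:ℝ)/2) * (ρ ^ j * (a j) ^ ((1:ℝ)/2)) :=
        Finset.sum_le_sum hblock
    _ = cm ^ ((1:ℝ)/2) * ∑ j ∈ Finset.range N, ρ ^ j * (a j) ^ ((1:ℝ)/2) := by
        rw [Finset.mul_sum]
    _ ≤ cm ^ ((1:ℝ)/2) * (((1 - r)⁻¹) ^ ((1:ℝ)/2) *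
        (∑ k : Fin N, ((k : ℕ) + 1 : ℝ) ^ (2 * s) * (x k) ^ 2) ^ ((1:ℝ)/2)) := by
        apply mul_le_mul_of_nonneg_left hCS (by positivity)
    _ = cm ^ ((1:ℝ)/2) * ((1 - r)⁻¹) ^ ((1:ℝ)/2) *
        (∑ k : Fin N, ((k : ℕ) + 1 : ℝ) ^ (2 * s) * (x k) ^ 2) ^ ((1:ℝ)/2) := by ring
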